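/- arXiv:2009.10683 — 3 statements merged into one kernel-verified Lean document; each statement's English description precedes it below -/
import Mathlib

section
/- As z → −1 within the slit plane, lim_{z→−1} κ₀(z)/√(1+z) = √2/π. -/
set_option maxHeartbeats 1000000

open Real Complex Filter

/-- The slit plane `ℂ \ [1,∞) \ (−∞,−1]`. -/
def Dslit : Set ℂ := {z : ℂ | ¬(z.im = 0 ∧ (1 ≤ z.re ∨ z.re ≤ -1))}

/-- Analytic extension of the degree-0 arc-cosine kernel to the slit plane. -/
noncomputable def K0C (z : ℂ) : ℂ :=
  ((Real.pi : ℂ) + Complex.I * Complex.log (z + Complex.I * ((1 - z ^ 2) ^ ((1 : ℂ) / 2))))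
    / (Real.pi : ℂ)

open Topology

lemma argAddMem {x y : ℂ} (him : x.im = -y.im)
    (h0 : y.im = 0 → 0 < x.re ∧ 0 < y.re) :
    x.arg + y.arg ∈ Set.Ioc (-Real.pi) Real.pi := by
  rcases lt_trichotomy y.im 0 with h | h | h
  · have h1 : y.arg < 0 := Complex.arg_neg_iff.2 h
    have h2 : -Real.pi < y.arg := Complex.neg_pi_lt_arg y
    have h3 : 0 ≤ x.arg := Complex.arg_nonneg_iff.2 (by rw [him]; linarith)
    have h4 : x.arg ≤ Real.pi := Complex.arg_le_pi x
    constructor <;> linarith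
  · obtain ⟨hx, hyre⟩ := h0 h
    have hx0 : x.arg = 0 := Complex.arg_eq_zero_iff.2 ⟨hx.le, by rw [him, h, neg_zero]⟩
    have hy0 : y.arg = 0 := Complex.arg_eq_zero_iff.2 ⟨hyre.le, h⟩
    rw [hx0, hy0]
    constructor <;> simp <;> linarith [Real.pi_pos]
  · have h1 : 0 ≤ y.arg := Complex.arg_nonneg_iff.2 h.le
    have h2 : y.arg ≠ Real.pi := fun hp => by
      have := (Complex.arg_eq_pi_iff.1 hp).2; linarith
    have h2' : y.arg < Real.pi := lt_of_le_of_ne (Complex.arg_le_pi y) h2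
    have h3 : x.arg < 0 := Complex.arg_neg_iff.2 (by rw [him]; linarith)
    have h4 : -Real.pi < x.arg := Complex.neg_pi_lt_arg x
    constructor <;> linarith

lemma sqrtMul {x y : ℂ} (hx : x ≠ 0) (hy : y ≠ 0)
    (harg : x.arg + y.arg ∈ Set.Ioc (-Real.pi) Real.pi) :
    (x * y) ^ ((1:ℂ)/2) = x ^ ((1:ℂ)/2) * y ^ ((1:ℂ)/2) := by
  have hlog := Complex.log_mul hx hy harg
  rw [Complex.cpow_def_of_ne_zero (mul_ne_zero hx hy), Complex.cpow_def_of_ne_zero hx,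
    Complex.cpow_def_of_ne_zero hy, hlog, add_mul, Complex.exp_add]

lemma absHalfPow (x : ℂ) : ‖x ^ ((1:ℂ)/2)‖ = Real.sqrt ‖x‖ := by
  have h12 : ((1:ℂ)/2) = (2⁻¹:ℂ) := by norm_num
  have hre' := abs_le.mp (Complex.abs_re_le_norm x)
  have h1 := Complex.cpow_inv_two_re x
  have h2 := Complex.abs_cpow_inv_two_im x
  have e1 : ((x ^ (2⁻¹:ℂ)).re)^2 = (‖x‖ + x.re)/2 := by
    rw [h1]; exact Real.sq_sqrt (by linarith)
  have e2 : ((x ^ (2⁻¹:ℂ)).im)^2 = (‖x‖ - x.re)/2 := by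
    rw [← _root_.sq_abs, h2]; exact Real.sq_sqrt (by linarith)
  have e3 : ‖x ^ (2⁻¹:ℂ)‖ ^ 2 = ‖x‖ := by
    rw [Complex.sq_norm, Complex.normSq_apply]; nlinarith [e1, e2]
  rw [h12, ← e3, Real.sqrt_sq (norm_nonneg _)]

lemma algAux (L u s p : ℂ) (hu : u ≠ 0) :
    Complex.I * (L / (-u)) / p * (-(u / s)) = Complex.I * L / p / s := by
  rw [div_neg, mul_neg, mul_neg, neg_div, neg_mul, neg_neg, div_mul_div_comm, mul_assoc,
    div_mul_cancel₀ _ hu, div_div]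

lemma vNe {z : ℂ} (hz : z ∈ Dslit) (hd : ‖z + 1‖ < 1/8) :
    (1 + z) + Complex.I * ((1 - z ^ 2) ^ ((1:ℂ)/2)) ≠ 0 := by
  simp only [Dslit, Set.mem_setOf_eq] at hz
  have hzm1 : z ≠ -1 := by
    rintro rfl; exact hz ⟨by simp, Or.inr (by norm_num)⟩
  have hw0 : (1 + z) ≠ 0 := fun h => hzm1 (by linear_combination h)
  have hz1 : z ≠ 1 := by
    rintro rfl
    rw [show ((1:ℂ) + 1) = 2 by norm_num, Complex.norm_two] at hd
    norm_num at hd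
  have ha0 : (1 - z) ≠ 0 := fun h => hz1 (by linear_combination -h)
  have hζ0 : (1 - z ^ 2) ≠ 0 := by
    rw [show (1 - z^2 : ℂ) = (1-z)*(1+z) by ring]; exact mul_ne_zero ha0 hw0
  have hsq : (1 - z^2) ^ ((1:ℂ)/2) * (1 - z^2) ^ ((1:ℂ)/2) = 1 - z^2 := by
    rw [← Complex.cpow_add _ _ hζ0, show ((1:ℂ)/2 + (1:ℂ)/2) = 1 by norm_num,
      Complex.cpow_one]
  have hζeq : (1 - z^2 : ℂ) = (1-z)*(1+z) := by ring
  intro h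
  have hq : (1 + z) * ((1 + z) + (1 - z)) = 0 := by
    linear_combination ((1+z) - Complex.I * ((1 - z^2) ^ ((1:ℂ)/2))) * h - hsq - hζeq
      + ((1 - z^2) ^ ((1:ℂ)/2))^2 * Complex.I_sq
  rcases mul_eq_zero.mp hq with hc | hc
  · exact hw0 hc
  · have h2 : (2:ℂ) = 0 := by linear_combination hc
    norm_num at h2

lemma keyEq {z : ℂ} (hz : z ∈ Dslit) (hd : ‖z + 1‖ < 1/8) :
    K0C z / ((1 + z) ^ ((1 : ℂ) / 2)) =
      Complex.I * (Complex.log (1 - ((1 + z) + Complex.I * ((1 - z ^ 2) ^ ((1:ℂ)/2)))) /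
          (-((1 + z) + Complex.I * ((1 - z ^ 2) ^ ((1:ℂ)/2))))) / (Real.pi : ℂ) *
        (-(((1 + z) ^ ((1:ℂ)/2)) + Complex.I * ((1 - z) ^ ((1:ℂ)/2)))) := by
  have hπ : (Real.pi : ℂ) ≠ 0 := by exact_mod_cast Real.pi_ne_zero
  have hv0 := vNe hz hd
  simp only [Dslit, Set.mem_setOf_eq] at hz
  have hzm1 : z ≠ -1 := by
    rintro rfl; exact hz ⟨by simp, Or.inr (by norm_num)⟩
  have hw0 : (1 + z) ≠ 0 := fun h => hzm1 (by linear_combination h)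
  have hz1 : z ≠ 1 := by
    rintro rfl
    rw [show ((1:ℂ) + 1) = 2 by norm_num, Complex.norm_two] at hd
    norm_num at hd
  have ha0 : (1 - z) ≠ 0 := fun h => hz1 (by linear_combination -h)
  have hζeq : (1 - z^2 : ℂ) = (1-z)*(1+z) := by ring
  have hζ0 : (1 - z ^ 2) ≠ 0 := by rw [hζeq]; exact mul_ne_zero ha0 hw0
  -- coordinates bounds
  have h01 := abs_le.mp (Complex.abs_re_le_norm (z+1))
  have h02 := Complex.abs_im_le_norm (z+1)
  have hre : z.re ≤ -(7/8) := by
    simp only [Complex.add_re, Complex.one_re] at h01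
    linarith [h01.2, hd]
  have him8 : |z.im| ≤ 1/8 := by
    have : (z+1).im = z.im := by simp
    rw [this] at h02; linarith [h02, hd]
  set A := ‖1 - z^2‖ with hA
  set r := (1 - z^2).re with hr
  set m := (1 - z^2).im with hm
  have hA0 : 0 < A := norm_pos_iff.mpr hζ0
  have hArm : A^2 = r^2 + m^2 := by
    rw [hA, Complex.sq_norm, Complex.normSq_apply]; ring
  have h_r := abs_le.mp (Complex.abs_re_le_norm (1 - z^2))
  have habs_ζ : A ≤ 17/64 := by
    rw [hA, hζeq, norm_mul]
    have h2 : ‖1 + z‖ < 1/8 := by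
      rw [show ((1:ℂ)+z) = z+1 by ring]; exact hd
    have h3 : ‖1 - z‖ ≤ 17/8 := by
      have t : ‖(2:ℂ) - (z+1)‖ ≤ ‖(2:ℂ)‖ + ‖z+1‖ := norm_sub_le _ _
      rw [show ((2:ℂ) - (z+1)) = 1 - z by ring] at t
      rw [Complex.norm_two] at t
      linarith [t, hd]
    calc ‖1-z‖ * ‖1+z‖ ≤ (17/8) * (1/8) := by
          apply mul_le_mul h3 h2.le (norm_nonneg _) (by norm_num)
      _ = 17/64 := by norm_num
  have hmval : m = -(2*z.re*z.im) := by
    rw [hm]; simp [Complex.sub_im, pow_two, Complex.mul_im]; ring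
  -- the key positivity of Im v
  have hKey : 0 ≤ z.im + ((1 - z^2) ^ ((1:ℂ)/2)).re := by
    have hre2 : ((1 - z^2) ^ ((1:ℂ)/2)).re = Real.sqrt ((A + r)/2) := by
      rw [show ((1:ℂ)/2) = (2⁻¹:ℂ) by norm_num, Complex.cpow_inv_two_re]
    rw [hre2]
    rcases le_or_gt 0 z.im with h | h
    · linarith [Real.sqrt_nonneg ((A+r)/2)]
    · have hgoal : (-z.im)^2 ≤ (A + r)/2 := by
        have hzre2 : (49:ℝ)/64 ≤ z.re^2 := by nlinarith [hre]
        have hm2 : (49/16) * z.im^2 ≤ m^2 := by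
          rw [hmval]
          nlinarith [mul_nonneg (by nlinarith [hzre2] : (0:ℝ) ≤ 4*z.re^2 - 49/16)
            (sq_nonneg z.im)]
        have hAr0 : 0 ≤ A + r := by linarith [h_r.1]
        have h2A : A - r ≤ 2*A := by linarith [h_r.1]
        have hprod : m^2 ≤ (A+r) * (2*A) := by
          have hmm : m^2 = (A+r)*(A-r) := by nlinarith [hArm]
          rw [hmm]; exact mul_le_mul_of_nonneg_left h2A hAr0
        nlinarith [hprod, hm2, mul_nonneg hAr0 (by linarith [habs_ζ] : (0:ℝ) ≤ 17/32 - 2*A)]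
      have := Real.le_sqrt_of_sq_le hgoal
      linarith
  have hImv : 0 ≤ ((1 + z) + Complex.I * ((1 - z^2) ^ ((1:ℂ)/2))).im := by
    have e : ((1 + z) + Complex.I * ((1 - z^2) ^ ((1:ℂ)/2))).im
        = z.im + ((1 - z^2) ^ ((1:ℂ)/2)).re := by
      simp [Complex.add_im, Complex.mul_im]
    rw [e]; exact hKey
  -- Re (1 - v) > 0
  have hsim : |((1 - z^2) ^ ((1:ℂ)/2)).im| = Real.sqrt ((A - r)/2) := by
    rw [show ((1:ℂ)/2) = (2⁻¹:ℂ) by norm_num]; exact Complex.abs_cpow_inv_two_im _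
  have hsim78 : |((1 - z^2) ^ ((1:ℂ)/2)).im| < 7/8 := by
    rw [hsim, Real.sqrt_lt' (by norm_num : (0:ℝ) < 7/8)]
    nlinarith [habs_ζ, h_r.1]
  have hRe1v : 0 < (1 - ((1 + z) + Complex.I * ((1 - z^2) ^ ((1:ℂ)/2)))).re := by
    have e : (1 - ((1 + z) + Complex.I * ((1 - z^2) ^ ((1:ℂ)/2)))).re
        = -z.re + ((1 - z^2) ^ ((1:ℂ)/2)).im := by
      simp only [Complex.sub_re, Complex.add_re, Complex.one_re, Complex.mul_re,
        Complex.I_re, Complex.I_im]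
      ring
    rw [e]
    have := abs_lt.mp hsim78
    linarith [this.1]
  have h1v0 : (1 - ((1 + z) + Complex.I * ((1 - z^2) ^ ((1:ℂ)/2)))) ≠ 0 := by
    intro h; rw [h] at hRe1v; simp at hRe1v
  -- the log identity
  have hargv : (-1:ℂ).arg + (1 - ((1 + z) + Complex.I * ((1 - z^2) ^ ((1:ℂ)/2)))).arg
      ∈ Set.Ioc (-Real.pi) Real.pi := by
    rw [Complex.arg_neg_one]
    have him1v : (1 - ((1 + z) + Complex.I * ((1 - z^2) ^ ((1:ℂ)/2)))).im ≤ 0 := by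
      rw [Complex.sub_im]; simp only [Complex.one_im]; linarith [hImv]
    have hle : (1 - ((1 + z) + Complex.I * ((1 - z^2) ^ ((1:ℂ)/2)))).arg ≤ 0 := by
      rcases him1v.lt_or_eq with h | h
      · exact (Complex.arg_neg_iff.2 h).le
      · exact le_of_eq (Complex.arg_eq_zero_iff.2 ⟨hRe1v.le, h⟩)
    constructor
    · linarith [Complex.neg_pi_lt_arg (1 - ((1 + z) + Complex.I * ((1 - z^2) ^ ((1:ℂ)/2)))),
        Real.pi_pos]
    · linarith
  have hlogu : Complex.log (z + Complex.I * ((1 - z^2) ^ ((1:ℂ)/2)))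
      = Real.pi * Complex.I + Complex.log (1 - ((1 + z) + Complex.I * ((1 - z^2) ^ ((1:ℂ)/2)))) := by
    have hu : (z + Complex.I * ((1 - z^2) ^ ((1:ℂ)/2)))
        = (-1) * (1 - ((1 + z) + Complex.I * ((1 - z^2) ^ ((1:ℂ)/2)))) := by ring
    rw [hu, Complex.log_mul (by norm_num) h1v0 hargv, Complex.log_neg_one]
  -- sqrt splitting
  have hsplit : (1 - z^2) ^ ((1:ℂ)/2) = (1 - z) ^ ((1:ℂ)/2) * (1 + z) ^ ((1:ℂ)/2) := by
    rw [hζeq]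
    refine sqrtMul ha0 hw0 (argAddMem (by simp) ?_)
    intro h
    have him0 : z.im = 0 := by simpa using h
    have hre1 : ¬(z.re ≤ -1) := fun hc => hz ⟨him0, Or.inr hc⟩
    push_neg at hre1
    constructor
    · simp only [Complex.sub_re, Complex.one_re]; linarith
    · simp only [Complex.add_re, Complex.one_re]; linarith
  have hsqw : (1 + z) ^ ((1:ℂ)/2) * (1 + z) ^ ((1:ℂ)/2) = 1 + z := by
    rw [← Complex.cpow_add _ _ hw0, show ((1:ℂ)/2 + (1:ℂ)/2) = 1 by norm_num, Complex.cpow_one]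
  have hsw0 : (1 + z) ^ ((1:ℂ)/2) ≠ 0 :=
    fun h => hw0 ((Complex.cpow_eq_zero_iff _ _).mp h).1
  have hfact : (((1 + z) ^ ((1:ℂ)/2)) + Complex.I * ((1 - z) ^ ((1:ℂ)/2))) * ((1 + z) ^ ((1:ℂ)/2))
      = (1 + z) + Complex.I * ((1 - z^2) ^ ((1:ℂ)/2)) := by
    linear_combination hsqw - Complex.I * hsplit
  have hexp : K0C z = Complex.I
      * Complex.log (1 - ((1 + z) + Complex.I * ((1 - z^2) ^ ((1:ℂ)/2)))) / (Real.pi : ℂ) := by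
    unfold K0C
    rw [hlogu, div_eq_div_iff hπ hπ]
    linear_combination ((Real.pi : ℂ))^2 * Complex.I_sq
  rw [hexp]
  have hdiv : (((1 + z) ^ ((1:ℂ)/2)) + Complex.I * ((1 - z) ^ ((1:ℂ)/2)))
      = ((1 + z) + Complex.I * ((1 - z^2) ^ ((1:ℂ)/2))) / ((1 + z) ^ ((1:ℂ)/2)) := by
    rw [eq_div_iff hsw0]; exact hfact
  rw [hdiv]
  exact (algAux _ _ _ _ hv0).symm

theorem k0_expansion_at_minus_one :
    Tendsto (fun z : ℂ => K0C z / ((1 + z) ^ ((1 : ℂ) / 2)))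
      (nhdsWithin (-1) Dslit)
      (nhds ((Real.sqrt 2 / Real.pi : ℝ) : ℂ)) := by
  have hπ : (Real.pi : ℂ) ≠ 0 := by exact_mod_cast Real.pi_ne_zero
  have hball : ∀ᶠ z : ℂ in 𝓝 (-1:ℂ), ‖z + 1‖ < 1/8 := by
    filter_upwards [Metric.ball_mem_nhds (-1:ℂ) (by norm_num : (0:ℝ) < 1/8)] with z hzb
    rw [Metric.mem_ball, Complex.dist_eq, sub_neg_eq_add] at hzb
    exact hzb
  have hS : ∀ᶠ z in 𝓝[Dslit] (-1:ℂ), z ∈ Dslit ∧ ‖z + 1‖ < 1/8 :=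
    eventually_mem_nhdsWithin.and (hball.filter_mono nhdsWithin_le_nhds)
  have hhalf0 : Tendsto (fun x : ℂ => x ^ ((1:ℂ)/2)) (𝓝 0) (𝓝 0) := by
    rw [tendsto_zero_iff_norm_tendsto_zero]
    have hc : Tendsto (fun x : ℂ => Real.sqrt ‖x‖) (𝓝 0)
        (𝓝 (Real.sqrt ‖(0:ℂ)‖)) :=
      (Real.continuous_sqrt.comp continuous_norm).tendsto 0
    simp only [norm_zero, Real.sqrt_zero] at hc
    refine hc.congr fun x => ?_
    rw [absHalfPow]
  have hw_t : Tendsto (fun z : ℂ => 1 + z) (𝓝 (-1:ℂ)) (𝓝 0) := by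
    have hcont : Continuous (fun z : ℂ => 1 + z) := by continuity
    have h2 := hcont.tendsto (-1:ℂ)
    norm_num at h2
    exact h2
  have hζ_t : Tendsto (fun z : ℂ => 1 - z^2) (𝓝 (-1:ℂ)) (𝓝 0) := by
    have hcont : Continuous (fun z : ℂ => 1 - z^2) := by continuity
    have h2 := hcont.tendsto (-1:ℂ)
    norm_num at h2
    exact h2
  have hsζ_t : Tendsto (fun z : ℂ => (1 - z^2) ^ ((1:ℂ)/2)) (𝓝 (-1:ℂ)) (𝓝 0) :=
    hhalf0.comp hζ_t
  have hv_t : Tendsto (fun z : ℂ => (1 + z) + Complex.I * ((1 - z^2) ^ ((1:ℂ)/2)))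
      (𝓝 (-1:ℂ)) (𝓝 0) := by
    have := hw_t.add (hsζ_t.const_mul Complex.I)
    simpa using this
  have hv_l : Tendsto (fun z : ℂ => (1 + z) + Complex.I * ((1 - z^2) ^ ((1:ℂ)/2)))
      (𝓝[Dslit] (-1:ℂ)) (𝓝[≠] (0:ℂ)) := by
    rw [tendsto_nhdsWithin_iff]
    refine ⟨hv_t.mono_left nhdsWithin_le_nhds, ?_⟩
    filter_upwards [hS] with z hz
    simp only [Set.mem_compl_iff, Set.mem_singleton_iff]
    exact vNe hz.1 hz.2
  have htail : Tendsto (fun t : ℂ => Complex.log (1 - t) / (-t)) (𝓝[≠] (0:ℂ)) (𝓝 1) := by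
    have hder1 : HasDerivAt (fun t : ℂ => 1 - t) (-1) 0 := by
      simpa using ((hasDerivAt_id (0:ℂ)).const_sub 1)
    have hder2 : HasDerivAt Complex.log ((1:ℂ))⁻¹ ((fun t : ℂ => 1 - t) 0) := by
      simpa using Complex.hasDerivAt_log (by simp [Complex.mem_slitPlane_iff] : (1:ℂ) ∈ Complex.slitPlane)
    have hder3 : HasDerivAt (fun t : ℂ => Complex.log (1 - t)) (-1) 0 := by
      simpa [Function.comp_def] using hder2.comp 0 hder1
    have h4 := hasDerivAt_iff_tendsto_slope.mp hder3
    have h5 : Tendsto (fun t : ℂ => -(slope (fun t : ℂ => Complex.log (1 - t)) 0 t))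
        (𝓝[≠] (0:ℂ)) (𝓝 1) := by simpa using h4.neg
    refine h5.congr fun t => ?_
    rw [slope_def_field]
    simp only [sub_zero, Complex.log_one]
    rw [div_neg]
  have h1 := htail.comp hv_l
  have hsw_l : Tendsto (fun z : ℂ => (1+z) ^ ((1:ℂ)/2)) (𝓝[Dslit] (-1:ℂ)) (𝓝 0) :=
    (hhalf0.comp hw_t).mono_left nhdsWithin_le_nhds
  have hval2 : (2:ℂ) ^ ((1:ℂ)/2) = ((Real.sqrt 2 : ℝ) : ℂ) := by
    rw [show ((1:ℂ)/2) = (((1/2 : ℝ)) : ℂ) by norm_num,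
        show ((2:ℂ)) = ((2:ℝ) : ℂ) by norm_num,
        ← Complex.ofReal_cpow (by norm_num : (0:ℝ) ≤ 2), Real.sqrt_eq_rpow]
  have hsa_l : Tendsto (fun z : ℂ => (1 - z) ^ ((1:ℂ)/2)) (𝓝[Dslit] (-1:ℂ))
      (𝓝 ((Real.sqrt 2 : ℝ) : ℂ)) := by
    have hc : ContinuousAt (fun x : ℂ => x ^ ((1:ℂ)/2)) 2 :=
      continuousAt_cpow_const (by simp [Complex.mem_slitPlane_iff])
    have h2t : Tendsto (fun z : ℂ => 1 - z) (𝓝 (-1:ℂ)) (𝓝 2) := by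
      have hcont : Continuous (fun z : ℂ => 1 - z) := by continuity
      have h3 := hcont.tendsto (-1:ℂ)
      norm_num at h3
      exact h3
    have hcomp := hc.tendsto.comp h2t
    rw [hval2] at hcomp
    exact hcomp.mono_left nhdsWithin_le_nhds
  have h2 : Tendsto (fun z : ℂ => -(((1+z) ^ ((1:ℂ)/2)) + Complex.I * ((1 - z) ^ ((1:ℂ)/2))))
      (𝓝[Dslit] (-1:ℂ)) (𝓝 (-((0:ℂ) + Complex.I * ((Real.sqrt 2 : ℝ) : ℂ)))) :=
    (hsw_l.add (hsa_l.const_mul Complex.I)).neg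
  have hG := ((h1.const_mul Complex.I).div_const (Real.pi : ℂ)).mul h2
  have hlim : Complex.I * 1 / (Real.pi : ℂ) * (-((0:ℂ) + Complex.I * ((Real.sqrt 2 : ℝ) : ℂ)))
      = ((Real.sqrt 2 / Real.pi : ℝ) : ℂ) := by
    push_cast
    linear_combination (-(((Real.sqrt 2 : ℝ) : ℂ)) / (Real.pi : ℂ)) * Complex.I_sq
  rw [hlim] at hG
  refine Tendsto.congr' ?_ hG
  filter_upwards [hS] with z hz
  exact (keyEq hz.1 hz.2).symm
end

section
/- For a = p/q ∈ (0,1) with p, q coprime positive integers, the function f(t) = (1/π) Σ_{k=0}^∞ (−1)^{k+1} Γ(ak+1) sin(πak)/(k! t^{ak+1}) satisfies f(t) ~ −1/(t^{a+1} Γ(−a)) as t → +∞; note −1/Γ(−a) > 0, so f is eventually positive. -/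
open Real Filter


noncomputable def ilTerm (a t : ℝ) (k : ℕ) : ℝ :=
  (-1 : ℝ) ^ (k + 1) * Real.Gamma (a * k + 1) * Real.sin (Real.pi * a * k) /
      ((Nat.factorial k : ℝ) * t ^ (a * k + 1))

/-- The series representation of the inverse Laplace transform of `exp(−s^a)`. -/
noncomputable def invLaplaceSeries (a : ℝ) (t : ℝ) : ℝ :=
  (1 / Real.pi) * ∑' k : ℕ,
    (-1 : ℝ) ^ (k + 1) * Real.Gamma (a * k + 1) * Real.sin (Real.pi * a * k) /
      ((Nat.factorial k : ℝ) * t ^ (a * k + 1))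

lemma invLaplaceSeries_eq (a t : ℝ) :
    invLaplaceSeries a t = (1 / Real.pi) * ∑' k : ℕ, ilTerm a t k := rfl

lemma gamma_le_fact {a : ℝ} (ha0 : 0 ≤ a) (ha1 : a ≤ 1) (k : ℕ) :
    Real.Gamma (a * k + 1) ≤ (Nat.factorial k : ℝ) := by
  have h1 : (1 : ℝ) ∈ Set.Ioi (0:ℝ) := by norm_num
  have h2 : ((k:ℝ) + 1) ∈ Set.Ioi (0:ℝ) := Set.mem_Ioi.mpr (by positivity)
  have h := Real.convexOn_Gamma.2 h1 h2 (by linarith : (0:ℝ) ≤ 1 - a) ha0 (by ring)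
  simp only [smul_eq_mul] at h
  rw [show (1-a)*1 + a*((k:ℝ)+1) = a*k+1 by ring, Real.Gamma_one,
    Real.Gamma_nat_eq_factorial] at h
  have hk : (1:ℝ) ≤ (Nat.factorial k : ℝ) := by
    exact_mod_cast Nat.one_le_iff_ne_zero.mpr (Nat.factorial_ne_zero k)
  nlinarith

lemma abs_ilTerm_le {a : ℝ} (ha0 : 0 < a) (ha1 : a < 1) {t : ℝ} (ht : 1 < t) (k : ℕ) :
    |ilTerm a t k| ≤ t⁻¹ * (t ^ (-a)) ^ k := by
  have ht0 : (0:ℝ) < t := by linarith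
  have hT : (0:ℝ) < t ^ (a * k + 1) := Real.rpow_pos_of_pos ht0 _
  have hF : (0:ℝ) < (Nat.factorial k : ℝ) := by positivity
  have hB : (0:ℝ) < (Nat.factorial k : ℝ) * t ^ (a * k + 1) := by positivity
  have hG : (0:ℝ) < Real.Gamma (a * k + 1) := Real.Gamma_pos_of_pos (by positivity)
  have hnum : |(-1 : ℝ) ^ (k + 1) * Real.Gamma (a * k + 1) * Real.sin (Real.pi * a * k)|
      ≤ (Nat.factorial k : ℝ) := by
    rw [abs_mul, abs_mul, abs_pow, abs_neg, abs_one, one_pow, one_mul, abs_of_pos hG]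
    calc Real.Gamma (a * k + 1) * |Real.sin (Real.pi * a * k)|
        ≤ Real.Gamma (a * k + 1) * 1 := by gcongr; exact Real.abs_sin_le_one _
      _ = Real.Gamma (a * k + 1) := mul_one _
      _ ≤ (Nat.factorial k : ℝ) := gamma_le_fact ha0.le ha1.le k
  have hrw : t⁻¹ * (t ^ (-a)) ^ k = ((t : ℝ) ^ (a * k + 1))⁻¹ := by
    rw [← Real.rpow_neg ht0.le, ← Real.rpow_natCast (t ^ (-a)) k,
      ← Real.rpow_mul ht0.le, ← Real.rpow_neg_one t, ← Real.rpow_add ht0]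
    congr 1; ring
  calc |ilTerm a t k| = |(-1 : ℝ) ^ (k + 1) * Real.Gamma (a * k + 1) *
        Real.sin (Real.pi * a * k)| / ((Nat.factorial k : ℝ) * t ^ (a * k + 1)) := by
        rw [ilTerm, abs_div, abs_of_pos hB]
    _ ≤ (Nat.factorial k : ℝ) / ((Nat.factorial k : ℝ) * t ^ (a * k + 1)) := by gcongr
    _ = ((t : ℝ) ^ (a * k + 1))⁻¹ := by field_simp
    _ = t⁻¹ * (t ^ (-a)) ^ k := hrw.symm

lemma summable_ilTerm {a : ℝ} (ha0 : 0 < a) (ha1 : a < 1) {t : ℝ} (ht : 1 < t) :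
    Summable (ilTerm a t) := by
  have ht0 : (0:ℝ) < t := by linarith
  have hu1 : t ^ (-a) < 1 := Real.rpow_lt_one_of_one_lt_of_neg ht (by linarith)
  have hu0 : (0:ℝ) ≤ t ^ (-a) := (Real.rpow_pos_of_pos ht0 _).le
  have hg : Summable (fun k : ℕ => t⁻¹ * (t ^ (-a)) ^ k) :=
    (summable_geometric_of_lt_one hu0 hu1).mul_left _
  exact (hg.of_nonneg_of_le (fun k => abs_nonneg _) (fun k => abs_ilTerm_le ha0 ha1 ht k)).of_abs

lemma ilSeries_split {a : ℝ} (ha0 : 0 < a) (ha1 : a < 1) {t : ℝ} (ht : 1 < t) :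
    invLaplaceSeries a t = (1 / Real.pi) *
      (Real.Gamma (a + 1) * Real.sin (Real.pi * a) / t ^ (a + 1) +
        ∑' k : ℕ, ilTerm a t (k + 2)) := by
  have hsum := summable_ilTerm ha0 ha1 ht
  rw [invLaplaceSeries_eq, ← Summable.sum_add_tsum_nat_add 2 hsum]
  congr 1
  rw [Finset.sum_range_succ, Finset.sum_range_one]
  norm_num [ilTerm]

lemma tail_bound {a : ℝ} (ha0 : 0 < a) (ha1 : a < 1) {t : ℝ} (ht : 1 < t)
    (hu : t ^ (-a) ≤ 1/2) :
    |∑' k : ℕ, ilTerm a t (k + 2)| ≤ 2 * t⁻¹ * (t ^ (-a)) ^ 2 := by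
  have ht0 : (0:ℝ) < t := by linarith
  have hu1 : t ^ (-a) < 1 := Real.rpow_lt_one_of_one_lt_of_neg ht (by linarith)
  have hu0 : (0:ℝ) ≤ t ^ (-a) := (Real.rpow_pos_of_pos ht0 _).le
  have hgeo : Summable (fun k : ℕ => (t ^ (-a)) ^ k) := summable_geometric_of_lt_one hu0 hu1
  have hgeo2 : Summable (fun k : ℕ => t⁻¹ * (t ^ (-a)) ^ (k + 2)) := by
    have : Summable (fun k : ℕ => (t⁻¹ * (t ^ (-a)) ^ 2) * (t ^ (-a)) ^ k) := hgeo.mul_left _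
    refine this.congr fun k => by ring
  have habs : Summable (fun k : ℕ => |ilTerm a t (k + 2)|) := by
    refine hgeo2.of_nonneg_of_le (fun k => abs_nonneg _) fun k => ?_
    exact abs_ilTerm_le ha0 ha1 ht (k + 2)
  have habs' : Summable (fun k : ℕ => ‖ilTerm a t (k + 2)‖) := by
    simpa only [Real.norm_eq_abs] using habs
  have h1 : |∑' k : ℕ, ilTerm a t (k + 2)| ≤ ∑' k : ℕ, |ilTerm a t (k + 2)| := by
    have := norm_tsum_le_tsum_norm habs'
    simpa only [Real.norm_eq_abs] using this
  have h2 : ∑' k : ℕ, |ilTerm a t (k + 2)| ≤ ∑' k : ℕ, t⁻¹ * (t ^ (-a)) ^ (k + 2) :=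
    Summable.tsum_le_tsum (fun k => abs_ilTerm_le ha0 ha1 ht (k + 2)) habs hgeo2
  have h3 : ∑' k : ℕ, t⁻¹ * (t ^ (-a)) ^ (k + 2)
      = (t⁻¹ * (t ^ (-a)) ^ 2) * (1 - t ^ (-a))⁻¹ := by
    rw [tsum_congr (fun k : ℕ => show t⁻¹ * (t ^ (-a)) ^ (k + 2)
        = (t⁻¹ * (t ^ (-a)) ^ 2) * (t ^ (-a)) ^ k by ring), tsum_mul_left,
      tsum_geometric_of_lt_one hu0 hu1]
  have h4 : (1 - t ^ (-a))⁻¹ ≤ 2 := by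
    rw [inv_le_comm₀ (by linarith) (by norm_num)]
    linarith
  have h5 : (t⁻¹ * (t ^ (-a)) ^ 2) * (1 - t ^ (-a))⁻¹ ≤ 2 * t⁻¹ * (t ^ (-a)) ^ 2 := by
    have hnn : (0:ℝ) ≤ t⁻¹ * (t ^ (-a)) ^ 2 := by positivity
    nlinarith [mul_le_mul_of_nonneg_left h4 hnn]
  linarith

lemma ratio_eq {a : ℝ} (ha0 : 0 < a) (ha1 : a < 1) {t : ℝ} (ht : 1 < t)
    (hc : 0 < Real.Gamma (a + 1) * Real.sin (Real.pi * a))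
    (hG : Real.Gamma (-a) * (Real.Gamma (a + 1) * Real.sin (Real.pi * a)) = -Real.pi) :
    invLaplaceSeries a t / (-1 / (t ^ (a + 1) * Real.Gamma (-a))) - 1
      = (∑' k : ℕ, ilTerm a t (k + 2)) * t ^ (a + 1) /
          (Real.Gamma (a + 1) * Real.sin (Real.pi * a)) := by
  have ht0 : (0:ℝ) < t := by linarith
  have hT : (0:ℝ) < t ^ (a + 1) := Real.rpow_pos_of_pos ht0 _
  have hπ := Real.pi_pos
  have hcne : Real.Gamma (a + 1) * Real.sin (Real.pi * a) ≠ 0 := ne_of_gt hc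
  have hGne : Real.Gamma (-a) ≠ 0 := by
    intro h
    rw [h, zero_mul] at hG
    linarith
  have hGval : Real.Gamma (-a) = -Real.pi / (Real.Gamma (a + 1) * Real.sin (Real.pi * a)) := by
    rw [eq_div_iff hcne]
    linarith [hG]
  rw [ilSeries_split ha0 ha1 ht, hGval]
  have hs0 := right_ne_zero_of_mul hcne
  have hg0 := left_ne_zero_of_mul hcne
  field_simp
  ring

theorem inv_laplace_tail_asymptotics (p q : ℕ) (hp : 0 < p) (hpq : p < q)
    (hcop : Nat.Coprime p q) :
    (0 : ℝ) < -1 / Real.Gamma (-((p : ℝ) / q)) ∧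
    Tendsto (fun t : ℝ =>
        invLaplaceSeries ((p : ℝ) / q) t /
          (-1 / (t ^ ((p : ℝ) / q + 1) * Real.Gamma (-((p : ℝ) / q)))))
      atTop (nhds 1) ∧
    (∀ᶠ t : ℝ in atTop, 0 < invLaplaceSeries ((p : ℝ) / q) t) := by
  have hq : (0:ℝ) < (q:ℝ) := by
    have : 0 < q := lt_trans hp hpq
    exact_mod_cast this
  set a : ℝ := (p:ℝ)/q with ha
  have ha0 : 0 < a := div_pos (by exact_mod_cast hp) hq
  have ha1 : a < 1 := (div_lt_one hq).mpr (by exact_mod_cast hpq)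
  have hπ := Real.pi_pos
  have hs : 0 < Real.sin (Real.pi * a) :=
    Real.sin_pos_of_pos_of_lt_pi (by positivity) (by nlinarith)
  have hGa : 0 < Real.Gamma (a + 1) := Real.Gamma_pos_of_pos (by linarith)
  have hc : 0 < Real.Gamma (a + 1) * Real.sin (Real.pi * a) := mul_pos hGa hs
  have hkey := Real.Gamma_mul_Gamma_one_sub (-a)
  rw [show (1 : ℝ) - -a = a + 1 by ring, show Real.pi * -a = -(Real.pi * a) by ring,
    Real.sin_neg] at hkey
  have hG : Real.Gamma (-a) * (Real.Gamma (a + 1) * Real.sin (Real.pi * a)) = -Real.pi := by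
    have hs' : Real.sin (Real.pi * a) ≠ 0 := ne_of_gt hs
    calc Real.Gamma (-a) * (Real.Gamma (a + 1) * Real.sin (Real.pi * a))
        = (Real.Gamma (-a) * Real.Gamma (a + 1)) * Real.sin (Real.pi * a) := by ring
      _ = (Real.pi / -Real.sin (Real.pi * a)) * Real.sin (Real.pi * a) := by rw [hkey]
      _ = -Real.pi := by rw [div_neg, neg_mul, div_mul_cancel₀ _ hs']
  have hGlt : Real.Gamma (-a) < 0 := by nlinarith
  have part1 : (0:ℝ) < -1 / Real.Gamma (-a) :=
    div_pos_iff.mpr (Or.inr ⟨by norm_num, hGlt⟩)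
  -- the eventual hypotheses
  have hEv : ∀ᶠ t : ℝ in atTop, 1 < t ∧ t ^ (-a) ≤ 1/2 := by
    filter_upwards [eventually_gt_atTop (1:ℝ),
      (tendsto_rpow_neg_atTop ha0).eventually (eventually_le_nhds (by norm_num : (0:ℝ) < 1/2))]
      with t h1 h2
    exact ⟨h1, h2⟩
  -- the bound
  have hbound : ∀ᶠ t : ℝ in atTop,
      |invLaplaceSeries a t / (-1 / (t ^ (a + 1) * Real.Gamma (-a))) - 1|
        ≤ (2 / (Real.Gamma (a + 1) * Real.sin (Real.pi * a))) * t ^ (-a) := by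
    filter_upwards [hEv] with t htt
    obtain ⟨ht, hu⟩ := htt
    have ht0 : (0:ℝ) < t := by linarith
    have hT : (0:ℝ) < t ^ (a + 1) := Real.rpow_pos_of_pos ht0 _
    rw [ratio_eq ha0 ha1 ht hc hG, abs_div, abs_of_pos hc, abs_mul, abs_of_pos hT]
    have h1 := tail_bound ha0 ha1 ht hu
    have hcollapse : t⁻¹ * (t ^ (-a)) ^ 2 * t ^ (a + 1) = t ^ (-a) := by
      rw [← Real.rpow_natCast (t ^ (-a)) 2, ← Real.rpow_mul ht0.le,
        ← Real.rpow_neg_one t, ← Real.rpow_add ht0, ← Real.rpow_add ht0]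
      congr 1
      push_cast
      ring
    rw [div_le_iff₀ hc]
    calc |∑' k : ℕ, ilTerm a t (k + 2)| * t ^ (a + 1)
        ≤ (2 * t⁻¹ * (t ^ (-a)) ^ 2) * t ^ (a + 1) := by gcongr
      _ = 2 * t ^ (-a) := by rw [mul_assoc 2, mul_assoc 2, hcollapse]
      _ = 2 / (Real.Gamma (a + 1) * Real.sin (Real.pi * a)) * t ^ (-a) *
            (Real.Gamma (a + 1) * Real.sin (Real.pi * a)) := by
              rw [div_mul_eq_mul_div, div_mul_cancel₀ _ hc.ne']
  -- tendsto
  have hto0 : Tendsto (fun t : ℝ =>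
      (2 / (Real.Gamma (a + 1) * Real.sin (Real.pi * a))) * t ^ (-a)) atTop (nhds 0) := by
    simpa using (tendsto_rpow_neg_atTop ha0).const_mul
      (2 / (Real.Gamma (a + 1) * Real.sin (Real.pi * a)))
  have habs0 : Tendsto (fun t : ℝ =>
      |invLaplaceSeries a t / (-1 / (t ^ (a + 1) * Real.Gamma (-a))) - 1|) atTop (nhds 0) :=
    squeeze_zero' (Eventually.of_forall fun t => abs_nonneg _) hbound hto0
  have part2 : Tendsto (fun t : ℝ =>
      invLaplaceSeries a t / (-1 / (t ^ (a + 1) * Real.Gamma (-a)))) atTop (nhds 1) := by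
    rw [tendsto_iff_dist_tendsto_zero]
    simpa [Real.dist_eq] using habs0
  refine ⟨part1, part2, ?_⟩
  have hfg := part2.eventually (eventually_gt_nhds (by norm_num : (0:ℝ) < 1))
  filter_upwards [hfg, eventually_gt_atTop (0:ℝ)] with t hfgt ht0
  have hgpos : 0 < -1 / (t ^ (a + 1) * Real.Gamma (-a)) := by
    have hT : (0:ℝ) < t ^ (a + 1) := Real.rpow_pos_of_pos ht0 _
    exact div_pos_iff.mpr (Or.inr ⟨by norm_num, mul_neg_of_pos_of_neg hT hGlt⟩)
  rcases div_pos_iff.mp hfgt with ⟨h, _⟩ | ⟨_, h⟩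
  · exact h
  · linarith
end

section
/- For every k ≥ 1, as z → 1 within the slit plane, N_k(z) = (k+1)(z+β²) + p_k(z)√(1−z) where lim_{z→1} p_k(z) = −√2(1+β²)k(k+1)/(2π); in particular lim_{z→1} (N_k(z) − (k+1)(z+β²))/√(1−z) = −√2(1+β²)k(k+1)/(2π). -/
open Real Complex Filter
open Set Topology

/-- Analytic extension of the degree-1 arc-cosine kernel to the slit plane. -/
noncomputable def K1C (z : ℂ) : ℂ :=
  (z * ((Real.pi : ℂ) + Complex.I * Complex.log (z + Complex.I * ((1 - z ^ 2) ^ ((1 : ℂ) / 2))))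
    + (1 - z ^ 2) ^ ((1 : ℂ) / 2)) / (Real.pi : ℂ)

/-- The NTK `N_k` on the slit plane, defined by the simplified recursion. -/
noncomputable def NkC (β : ℝ) : ℕ → ℂ → ℂ
  | 0 => fun z => z + (β : ℂ) ^ 2
  | (k + 1) => fun z => K1C^[k + 1] z + NkC β k z * K0C (K1C^[k] z) + (β : ℂ) ^ 2

set_option maxHeartbeats 1000000

noncomputable def sw (z : ℂ) : ℂ := (1 - z) ^ ((1:ℂ)/2)
noncomputable def su (z : ℂ) : ℂ := (1 + z) ^ ((1:ℂ)/2)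
noncomputable def phiC (z : ℂ) : ℂ :=
  -Complex.I * Complex.log (z + Complex.I * ((1 - z ^ 2) ^ ((1 : ℂ)/2)))
noncomputable abbrev L1f : Filter ℂ := nhdsWithin 1 {(1:ℂ)}ᶜ

lemma half_ne_zero' : ((1:ℂ)/2) ≠ 0 := by norm_num

lemma cpow_half_mul_self (a : ℂ) : a ^ ((1:ℂ)/2) * a ^ ((1:ℂ)/2) = a := by
  by_cases h : a = 0
  · simp [h, Complex.zero_cpow half_ne_zero']
  · rw [← Complex.cpow_add _ _ h]
    norm_num

lemma re_cpow_half_nonneg (a : ℂ) : 0 ≤ (a ^ ((1:ℂ)/2)).re := by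
  by_cases h : a = 0
  · simp [h, Complex.zero_cpow half_ne_zero']
  rw [Complex.cpow_def_of_ne_zero h, Complex.exp_re]
  have him : (Complex.log a * ((1:ℂ)/2)).im = a.arg / 2 := by
    simp [Complex.mul_im, Complex.log_im]
    ring
  rw [him]
  have h1 := Complex.neg_pi_lt_arg a
  have h2 := Complex.arg_le_pi a
  exact mul_nonneg (Real.exp_pos _).le
    (Real.cos_nonneg_of_mem_Icc ⟨by linarith, by linarith⟩)

lemma cpow_half_eq_of_sq {a c : ℂ} (h : c * c = a) (hc : 0 < c.re) :
    a ^ ((1:ℂ)/2) = c := by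
  have hs := cpow_half_mul_self a
  have hfac : (a ^ ((1:ℂ)/2) - c) * (a ^ ((1:ℂ)/2) + c) = 0 := by
    linear_combination hs - h
  rcases mul_eq_zero.1 hfac with h1 | h1
  · exact sub_eq_zero.1 h1
  · exfalso
    have heq : a ^ ((1:ℂ)/2) = -c := eq_neg_of_add_eq_zero_left h1
    have hre := re_cpow_half_nonneg a
    rw [heq, Complex.neg_re] at hre
    linarith

lemma mul_cpow_of_arg {x y : ℂ} (hx : x ≠ 0) (hy : y ≠ 0)
    (h : x.arg + y.arg ∈ Set.Ioc (-π) π) :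
    (x * y) ^ ((1:ℂ)/2) = x ^ ((1:ℂ)/2) * y ^ ((1:ℂ)/2) := by
  rw [Complex.cpow_def_of_ne_zero (mul_ne_zero hx hy), Complex.cpow_def_of_ne_zero hx,
    Complex.cpow_def_of_ne_zero hy, Complex.log_mul hx hy h, add_mul, Complex.exp_add]

lemma arg_sum_mem (z : ℂ) :
    ((1:ℂ) - z).arg + ((1:ℂ) + z).arg ∈ Set.Ioc (-π) π := by
  have hpi := Real.pi_pos
  rcases lt_trichotomy z.im 0 with him | him | him
  · have ha : 0 < ((1:ℂ) - z).arg := by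
      have h0 : 0 ≤ ((1:ℂ) - z).arg := Complex.arg_nonneg_iff.2 (by simp; linarith)
      rcases h0.lt_or_eq with h | h
      · exact h
      · exfalso
        have := Complex.arg_eq_zero_iff.1 h.symm
        simp at this
        linarith [this.2]
    have ha' : ((1:ℂ) - z).arg ≤ π := Complex.arg_le_pi _
    have hb : ((1:ℂ) + z).arg < 0 := Complex.arg_neg_iff.2 (by simp [him])
    have hb' : -π < ((1:ℂ) + z).arg := Complex.neg_pi_lt_arg _
    constructor <;> linarith
  · have hra : ((1:ℂ) - z).arg = 0 ∨ ((1:ℂ) - z).arg = π := by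
      rcases le_or_gt 0 ((1:ℂ) - z).re with h | h
      · exact Or.inl (Complex.arg_eq_zero_iff.2 ⟨h, by simp [him]⟩)
      · exact Or.inr (Complex.arg_eq_pi_iff.2 ⟨h, by simp [him]⟩)
    have hrb : ((1:ℂ) + z).arg = 0 ∨ ((1:ℂ) + z).arg = π := by
      rcases le_or_gt 0 ((1:ℂ) + z).re with h | h
      · exact Or.inl (Complex.arg_eq_zero_iff.2 ⟨h, by simp [him]⟩)
      · exact Or.inr (Complex.arg_eq_pi_iff.2 ⟨h, by simp [him]⟩)
    rcases hra with h | h <;> rcases hrb with h' | h'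
    · constructor <;> simp [h, h'] <;> linarith
    · constructor <;> simp [h, h'] <;> linarith
    · constructor <;> simp [h, h'] <;> linarith
    · exfalso
      have ha := Complex.arg_eq_pi_iff.1 h
      have hb := Complex.arg_eq_pi_iff.1 h'
      have h1 : ((1:ℂ) - z).re = 1 - z.re := by simp
      have h2 : ((1:ℂ) + z).re = 1 + z.re := by simp
      rw [h1] at ha; rw [h2] at hb
      linarith [ha.1, hb.1]
  · have ha : ((1:ℂ) - z).arg < 0 := Complex.arg_neg_iff.2 (by simp; linarith)
    have ha' : -π < ((1:ℂ) - z).arg := Complex.neg_pi_lt_arg _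
    have hb : 0 < ((1:ℂ) + z).arg := by
      have h0 : 0 ≤ ((1:ℂ) + z).arg := Complex.arg_nonneg_iff.2 (by simp; linarith)
      rcases h0.lt_or_eq with h | h
      · exact h
      · exfalso
        have := Complex.arg_eq_zero_iff.1 h.symm
        simp at this
        linarith [this.2]
    have hb' : ((1:ℂ) + z).arg ≤ π := Complex.arg_le_pi _
    have hbne : ((1:ℂ) + z).arg ≠ π := by
      intro h
      have := (Complex.arg_eq_pi_iff.1 h).2
      simp at this
      linarith
    refine ⟨by linarith, ?_⟩
    rcases hb'.lt_or_eq with h | h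
    · linarith
    · exact absurd h hbne

lemma sqrtMul_s19 (z : ℂ) :
    (1 - z ^ 2) ^ ((1:ℂ)/2) = (1 - z) ^ ((1:ℂ)/2) * (1 + z) ^ ((1:ℂ)/2) := by
  by_cases h1 : z = 1
  · simp [h1, Complex.zero_cpow half_ne_zero']
  by_cases h2 : z = -1
  · norm_num [h2, Complex.zero_cpow half_ne_zero']
  have hx : (1:ℂ) - z ≠ 0 := sub_ne_zero.2 (fun h => h1 h.symm)
  have hy : (1:ℂ) + z ≠ 0 := fun h => h2 (by linear_combination h)
  have hfac : (1:ℂ) - z ^ 2 = (1 - z) * (1 + z) := by ring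
  rw [hfac, mul_cpow_of_arg hx hy (arg_sum_mem z)]

lemma ev_ne : ∀ᶠ z in L1f, z ≠ (1:ℂ) := eventually_mem_nhdsWithin

lemma ev_sub_ne : ∀ᶠ z in L1f, (1:ℂ) - z ≠ 0 :=
  ev_ne.mono fun z hz => sub_ne_zero.2 fun h => hz h.symm

lemma ev_sw_ne : ∀ᶠ z in L1f, sw z ≠ 0 := by
  filter_upwards [ev_sub_ne] with z hz
  simp only [sw, Ne, Complex.cpow_eq_zero_iff, not_and_or]
  exact Or.inl hz

lemma tendsto_cpow_half_zero {α : Type*} {f : α → ℂ} {l : Filter α}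
    (h : Tendsto f l (𝓝 0)) : Tendsto (fun z => f z ^ ((1:ℂ)/2)) l (𝓝 0) := by
  rw [tendsto_zero_iff_norm_tendsto_zero]
  have habs : ∀ z, ‖f z ^ ((1:ℂ)/2)‖ = ‖f z‖ ^ ((1:ℝ)/2) := by
    intro z
    rw [show ((1:ℂ)/2) = (((1:ℝ)/2 : ℝ) : ℂ) by norm_num]
    exact Complex.norm_cpow_real _ _
  simp only [habs]
  have h0 : Tendsto (fun z => ‖f z‖) l (𝓝 0) := by
    simpa [tendsto_zero_iff_norm_tendsto_zero] using h
  have hc : Tendsto (fun t : ℝ => t ^ ((1:ℝ)/2)) (𝓝 0) (𝓝 0) := by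
    have := (Real.continuousAt_rpow_const 0 ((1:ℝ)/2) (Or.inr (by norm_num))).tendsto
    simpa [Real.zero_rpow (by norm_num : ((1:ℝ)/2) ≠ 0)] using this
  exact hc.comp h0

lemma tendsto_one_sub : Tendsto (fun z : ℂ => 1 - z) L1f (𝓝 0) := by
  have hc : Continuous (fun z : ℂ => 1 - z) := by fun_prop
  have := (hc.tendsto (1:ℂ)).mono_left (nhdsWithin_le_nhds (s := {(1:ℂ)}ᶜ))
  simpa using this

lemma tendsto_sw : Tendsto sw L1f (𝓝 0) := tendsto_cpow_half_zero tendsto_one_sub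

lemma two_cpow_half : (2:ℂ) ^ ((1:ℂ)/2) = (Real.sqrt 2 : ℂ) := by
  rw [show ((1:ℂ)/2) = (((1:ℝ)/2 : ℝ) : ℂ) by norm_num,
    show ((2:ℂ)) = (((2:ℝ)) : ℂ) by norm_num,
    ← Complex.ofReal_cpow (by norm_num : (0:ℝ) ≤ 2)]
  norm_num [Real.sqrt_eq_rpow]

lemma s2sq : (Real.sqrt 2 : ℂ) * (Real.sqrt 2 : ℂ) = 2 := by
  rw [← Complex.ofReal_mul]
  norm_num [Real.mul_self_sqrt]

lemma s2ne : (Real.sqrt 2 : ℂ) ≠ 0 := by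
  simp [Real.sqrt_eq_zero']

lemma tendsto_su : Tendsto su L1f (𝓝 (Real.sqrt 2 : ℂ)) := by
  have hadd : ContinuousAt (fun z : ℂ => 1 + z) 1 := by fun_prop
  have h2 : ContinuousAt (fun w : ℂ => w ^ ((1:ℂ)/2)) ((fun z : ℂ => 1 + z) 1) := by
    have he : ((fun z : ℂ => 1 + z) 1) = 2 := by norm_num
    rw [he]
    exact continuousAt_cpow_const (by rw [Complex.mem_slitPlane_iff]; norm_num)
  have hcomp : ContinuousAt su 1 := h2.comp hadd
  have h1 : Tendsto su (𝓝 1) (𝓝 (su 1)) := hcomp.tendsto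
  have hval : su 1 = (Real.sqrt 2 : ℂ) := by
    rw [su, show (1:ℂ)+1 = 2 by norm_num, two_cpow_half]
  rw [hval] at h1
  exact h1.mono_left nhdsWithin_le_nhds

lemma tslope_su :
    Tendsto (fun z : ℂ => (su z - (Real.sqrt 2 : ℂ))/(1 - z)) L1f
      (𝓝 (-(2 * (Real.sqrt 2 : ℂ))⁻¹)) := by
  have hlim : Tendsto (fun z : ℂ => -(su z + (Real.sqrt 2 : ℂ))⁻¹) L1f
      (𝓝 (-(2 * (Real.sqrt 2 : ℂ))⁻¹)) := by
    have h : Tendsto (fun z : ℂ => su z + (Real.sqrt 2 : ℂ)) L1f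
        (𝓝 ((Real.sqrt 2 : ℂ) + (Real.sqrt 2 : ℂ))) := tendsto_su.add tendsto_const_nhds
    have h2 : ((Real.sqrt 2 : ℂ) + (Real.sqrt 2 : ℂ)) ≠ 0 := by
      rw [show (Real.sqrt 2 : ℂ) + (Real.sqrt 2 : ℂ) = 2 * (Real.sqrt 2:ℂ) by ring]
      exact mul_ne_zero two_ne_zero s2ne
    have := (h.inv₀ h2).neg
    simpa [show (Real.sqrt 2 : ℂ) + (Real.sqrt 2 : ℂ) = 2 * (Real.sqrt 2:ℂ) by ring] using this
  apply hlim.congr'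
  have hev : ∀ᶠ z in L1f, su z + (Real.sqrt 2 : ℂ) ≠ 0 := by
    have h : Tendsto (fun z : ℂ => su z + (Real.sqrt 2 : ℂ)) L1f
        (𝓝 (2 * (Real.sqrt 2 : ℂ))) := by
      have := tendsto_su.add (tendsto_const_nhds (x := (Real.sqrt 2 : ℂ)))
      simpa [show (Real.sqrt 2 : ℂ) + (Real.sqrt 2 : ℂ) = 2 * (Real.sqrt 2:ℂ) by ring] using this
    exact h.eventually_ne (mul_ne_zero two_ne_zero s2ne)
  filter_upwards [hev, ev_ne] with z hz hz1
  have h1z : (1:ℂ) - z ≠ 0 := sub_ne_zero.2 fun h => hz1 h.symm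
  have hsq : su z * su z = 1 + z := cpow_half_mul_self (1+z)
  field_simp
  linear_combination -hsq + s2sq

lemma tendsto_logcube :
    Tendsto (fun x : ℂ => (Complex.log (1+x) - (x - x^2/2 + x^3/3))/x^3)
      (nhdsWithin 0 {(0:ℂ)}ᶜ) (𝓝 0) := by
  have hP : ∀ x : ℂ, Complex.logTaylor 4 x = x - x^2/2 + x^3/3 := by
    intro x
    simp [Complex.logTaylor_succ, Complex.logTaylor_zero]
    ring
  have hbound : ∀ᶠ x in nhdsWithin (0:ℂ) {(0:ℂ)}ᶜ,
      ‖(Complex.log (1+x) - (x - x^2/2 + x^3/3))/x^3‖ ≤ ‖x‖ * (1 - ‖x‖)⁻¹ / 4 := by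
    have hball : ∀ᶠ x in nhdsWithin (0:ℂ) {(0:ℂ)}ᶜ, ‖x‖ < 1/2 := by
      have h : Tendsto (fun x : ℂ => ‖x‖) (nhdsWithin 0 {(0:ℂ)}ᶜ) (𝓝 0) := by
        have := (continuous_norm.tendsto (0:ℂ)).mono_left
          (nhdsWithin_le_nhds (s := {(0:ℂ)}ᶜ))
        simpa using this
      exact h.eventually_lt_const (by norm_num)
    filter_upwards [hball, eventually_mem_nhdsWithin (s := {(0:ℂ)}ᶜ)] with x hx hx0
    have hx0' : x ≠ 0 := hx0
    have h1 := Complex.norm_log_sub_logTaylor_le 3 (by linarith : ‖x‖ < 1)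
    rw [hP] at h1
    have hxpos : 0 < ‖x‖ := norm_pos_iff.2 hx0'
    rw [norm_div, norm_pow]
    rw [div_le_iff₀ (by positivity)]
    calc ‖Complex.log (1+x) - (x - x^2/2 + x^3/3)‖
        ≤ ‖x‖ ^ 4 * (1 - ‖x‖)⁻¹ / 4 := by
          have h4 : ((3:ℝ) + 1) = 4 := by norm_num
          simpa [h4] using h1
      _ = ‖x‖ * (1 - ‖x‖)⁻¹ / 4 * ‖x‖ ^ 3 := by ring
  have hz : Tendsto (fun x : ℂ => ‖x‖ * (1 - ‖x‖)⁻¹ / 4)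
      (nhdsWithin 0 {(0:ℂ)}ᶜ) (𝓝 0) := by
    have hn : Tendsto (fun x : ℂ => ‖x‖) (nhdsWithin 0 {(0:ℂ)}ᶜ) (𝓝 0) := by
      have := (continuous_norm.tendsto (0:ℂ)).mono_left
        (nhdsWithin_le_nhds (s := {(0:ℂ)}ᶜ))
      simpa using this
    have hinv : Tendsto (fun x : ℂ => (1 - ‖x‖)⁻¹) (nhdsWithin 0 {(0:ℂ)}ᶜ) (𝓝 1) := by
      have h1 : Tendsto (fun x : ℂ => 1 - ‖x‖) (nhdsWithin 0 {(0:ℂ)}ᶜ) (𝓝 1) := by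
        simpa using (tendsto_const_nhds (x := (1:ℝ))).sub hn
      simpa using h1.inv₀ one_ne_zero
    have := (hn.mul hinv).div_const (4:ℝ)
    simpa using this
  exact squeeze_zero_norm' hbound hz
section T5
open Real Complex Filter Set Topology

lemma Is2_ne : Complex.I * (Real.sqrt 2 : ℂ) ≠ 0 := mul_ne_zero Complex.I_ne_zero s2ne

lemma tphi3 :
    Tendsto (fun z : ℂ => (phiC z - (Real.sqrt 2:ℂ) * sw z)/(sw z)^3) L1f
      (𝓝 ((Real.sqrt 2:ℂ)/12)) := by
  set s2 : ℂ := (Real.sqrt 2 : ℂ) with hs2def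
  set v : ℂ → ℂ := fun z => Complex.I * su z - sw z with hvdef
  set x : ℂ → ℂ := fun z => sw z * v z with hxdef
  have hvlim : Tendsto v L1f (𝓝 (Complex.I * s2)) := by
    have := (tendsto_su.const_mul (Complex.I)).sub tendsto_sw
    simpa using this
  have hv_ne : ∀ᶠ z in L1f, v z ≠ 0 := hvlim.eventually_ne Is2_ne
  have hxlim : Tendsto x L1f (𝓝 0) := by
    have := tendsto_sw.mul hvlim
    simpa using this
  have hxne : ∀ᶠ z in L1f, x z ≠ 0 := by
    filter_upwards [ev_sw_ne, hv_ne] with z h1 h2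
    exact mul_ne_zero h1 h2
  have hxwithin : Tendsto x L1f (nhdsWithin 0 {(0:ℂ)}ᶜ) :=
    tendsto_nhdsWithin_iff.mpr ⟨hxlim, hxne⟩
  have hLam : Tendsto (fun z : ℂ =>
      (Complex.log (1 + x z) - (x z - (x z)^2/2 + (x z)^3/3))/(x z)^3) L1f (𝓝 0) :=
    tendsto_logcube.comp hxwithin
  -- limit of the explicit combination
  have hG : Tendsto (fun z : ℂ =>
      -Complex.I * ((Complex.log (1 + x z) - (x z - (x z)^2/2 + (x z)^3/3))/(x z)^3) * (v z)^3
      + ((su z - s2)/(1-z) + su z + Complex.I * sw z - Complex.I * (v z)^3/3)) L1f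
      (𝓝 (-Complex.I * 0 * (Complex.I*s2)^3
        + (-(2*s2)⁻¹ + s2 + Complex.I * 0 - Complex.I * (Complex.I*s2)^3/3))) := by
    exact ((hLam.const_mul (-Complex.I)).mul (hvlim.pow 3)).add
      (((tslope_su.add tendsto_su).add (tendsto_sw.const_mul Complex.I)).sub
        ((hvlim.pow 3).const_mul Complex.I |>.div_const 3))
  have hC : -Complex.I * 0 * (Complex.I*s2)^3
      + (-(2*s2)⁻¹ + s2 + Complex.I * 0 - Complex.I * (Complex.I*s2)^3/3) = s2/12 := by
    have h1 : (2*s2)⁻¹ = s2/4 := by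
      refine inv_eq_of_mul_eq_one_right ?_
      linear_combination s2sq/2
    rw [h1]
    linear_combination (-(Complex.I*Complex.I*s2^3)/3 + s2^3/3) * Complex.I_mul_I
      + (-(s2/3)) * s2sq
  rw [hC] at hG
  apply hG.congr'
  filter_upwards [ev_ne, ev_sw_ne, hv_ne] with z hz1 hswne hvne
  have hw : sw z * sw z = 1 - z := cpow_half_mul_self _
  have hu : su z * su z = 1 + z := cpow_half_mul_self _
  have h1z : (1:ℂ) - z ≠ 0 := sub_ne_zero.2 fun h => hz1 h.symm
  have hphi : phiC z = -Complex.I * Complex.log (1 + x z) := by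
    have harg : z + Complex.I * ((1 - z^2) ^ ((1:ℂ)/2)) = 1 + x z := by
      rw [sqrtMul_s19]
      simp only [hxdef, hvdef]
      show z + Complex.I * (sw z * su z) = 1 + sw z * (Complex.I * su z - sw z)
      linear_combination hw
    rw [phiC, harg]
  have hxne' : x z ≠ 0 := mul_ne_zero hswne hvne
  have hb3 : (sw z)^3 ≠ 0 := pow_ne_zero _ hswne
  have hx3 : (x z)^3 = (sw z)^3 * (v z)^3 := by
    show (sw z * v z)^3 = _
    ring
  set L := Complex.log (1 + x z) with hLdef
  have hv3 : (v z)^3 ≠ 0 := pow_ne_zero _ hvne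
  have hdiv1 : -Complex.I * ((L - (x z - x z^2/2 + x z^3/3))/(x z)^3) * (v z)^3 * (sw z)^3
      = -Complex.I * (L - (x z - x z^2/2 + x z^3/3)) := by
    rw [hx3]
    field_simp
  have hdiv2 : ((su z - s2)/(1-z)) * (sw z)^3 = (su z - s2) * sw z := by
    rw [← hw]
    field_simp
  have hkey : (-Complex.I * ((L - (x z - x z^2/2 + x z^3/3))/(x z)^3) * (v z)^3
      + ((su z - s2)/(1-z) + su z + Complex.I*sw z - Complex.I*(v z)^3/3)) * (sw z)^3
      = -Complex.I * L - s2 * sw z := by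
    have hI : Complex.I * Complex.I = -1 := Complex.I_mul_I
    calc (-Complex.I * ((L - (x z - x z^2/2 + x z^3/3))/(x z)^3) * (v z)^3
        + ((su z - s2)/(1-z) + su z + Complex.I*sw z - Complex.I*(v z)^3/3)) * (sw z)^3
        = -Complex.I * ((L - (x z - x z^2/2 + x z^3/3))/(x z)^3) * (v z)^3 * (sw z)^3
          + ((su z - s2)/(1-z)) * (sw z)^3
          + (su z + Complex.I*sw z - Complex.I*(v z)^3/3) * (sw z)^3 := by ring
      _ = -Complex.I * (L - (x z - x z^2/2 + x z^3/3)) + (su z - s2) * sw z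
          + (su z + Complex.I*sw z - Complex.I*(v z)^3/3) * (sw z)^3 := by
            rw [hdiv1, hdiv2]
      _ = -Complex.I * L - s2 * sw z := by
            simp only [hxdef, hvdef]
            linear_combination ((-1/2)*Complex.I + (-1/2)*Complex.I*z
                + (-1/2)*(su z)^2*Complex.I^3 + sw z*su z + sw z*su z*Complex.I^2
                + (1/2)*(sw z)^2*Complex.I) * hw
              + ((-1/2)*Complex.I^3 + (1/2)*Complex.I^3*z) * hu
              + ((-1/2)*Complex.I + (1/2)*Complex.I*z^2 + 2*sw z*su z
                - sw z*su z*z) * hI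
  rw [hphi]
  rw [show -Complex.I * L - s2 * sw z
      = (-Complex.I * ((L - (x z - x z^2/2 + x z^3/3))/(x z)^3) * (v z)^3
      + ((su z - s2)/(1-z) + su z + Complex.I*sw z - Complex.I*(v z)^3/3)) * (sw z)^3
      from hkey.symm]
  exact (mul_div_cancel_right₀ _ hb3).symm

lemma tphi1 : Tendsto (fun z : ℂ => phiC z / sw z) L1f (𝓝 ((Real.sqrt 2:ℂ))) := by
  have h : Tendsto (fun z : ℂ => (Real.sqrt 2:ℂ)
      + ((phiC z - (Real.sqrt 2:ℂ) * sw z)/(sw z)^3) * (sw z * sw z)) L1f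
      (𝓝 ((Real.sqrt 2:ℂ) + ((Real.sqrt 2:ℂ)/12) * (0 * 0))) :=
    tendsto_const_nhds.add (tphi3.mul (tendsto_sw.mul tendsto_sw))
  have h' : ((Real.sqrt 2:ℂ) + ((Real.sqrt 2:ℂ)/12) * (0 * 0)) = (Real.sqrt 2:ℂ) := by ring
  rw [h'] at h
  apply h.congr'
  filter_upwards [ev_sw_ne] with z hsw
  field_simp
  ring

lemma tphi0 : Tendsto phiC L1f (𝓝 0) := by
  have h := tphi1.mul tendsto_sw
  rw [mul_zero] at h
  apply h.congr'
  filter_upwards [ev_sw_ne] with z hsw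
  field_simp

lemma piC_ne : ((Real.pi:ℝ) : ℂ) ≠ 0 := Complex.ofReal_ne_zero.mpr Real.pi_ne_zero

lemma K0C_eq (z : ℂ) : K0C z = 1 - phiC z / ((Real.pi:ℝ):ℂ) := by
  rw [K0C, phiC]
  field_simp [piC_ne]
  ring

lemma K1C_eq (z : ℂ) :
    K1C z = z - (z * phiC z - (1 - z^2) ^ ((1:ℂ)/2))/((Real.pi:ℝ):ℂ) := by
  rw [K1C, phiC]
  field_simp [piC_ne]
  ring

lemma tendsto_id1 : Tendsto (fun z : ℂ => z) L1f (𝓝 1) :=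
  (continuous_id.tendsto (1:ℂ)).mono_left nhdsWithin_le_nhds

lemma tK1sub : Tendsto (fun z : ℂ => (K1C z - z)/sw z) L1f (𝓝 0) := by
  have h : Tendsto (fun z : ℂ => -(z * (phiC z / sw z) - su z)/((Real.pi:ℝ):ℂ)) L1f
      (𝓝 (-(1 * (Real.sqrt 2:ℂ) - (Real.sqrt 2:ℂ))/((Real.pi:ℝ):ℂ))) :=
    (((tendsto_id1.mul tphi1).sub tendsto_su).neg).div_const _
  have h' : (-(1 * (Real.sqrt 2:ℂ) - (Real.sqrt 2:ℂ))/((Real.pi:ℝ):ℂ)) = 0 := by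
    simp
  rw [h'] at h
  apply h.congr'
  filter_upwards [ev_sw_ne] with z hsw
  rw [K1C_eq, sqrtMul_s19]
  show -(z * (phiC z / sw z) - su z) / _
      = (z - (z * phiC z - sw z * su z) / _ - z) / sw z
  field_simp
  ring

lemma tr5 : Tendsto (fun z : ℂ => ((1 - K1C z)/(1-z) - 1)/sw z) L1f
    (𝓝 (-(2*(Real.sqrt 2:ℂ)/(3*((Real.pi:ℝ):ℂ))))) := by
  have h : Tendsto (fun z : ℂ =>
      (z * ((phiC z - (Real.sqrt 2:ℂ) * sw z)/(sw z)^3)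
        + (-(Real.sqrt 2:ℂ) - (su z - (Real.sqrt 2:ℂ))/(1-z))) / ((Real.pi:ℝ):ℂ)) L1f
      (𝓝 ((1 * ((Real.sqrt 2:ℂ)/12)
        + (-(Real.sqrt 2:ℂ) - -(2 * (Real.sqrt 2 : ℂ))⁻¹)) / ((Real.pi:ℝ):ℂ))) :=
    (((tendsto_id1.mul tphi3).add
      ((tendsto_const_nhds (x := -(Real.sqrt 2:ℂ))).sub tslope_su)).div_const _)
  have hval : ((1 * ((Real.sqrt 2:ℂ)/12)
      + (-(Real.sqrt 2:ℂ) - -(2 * (Real.sqrt 2 : ℂ))⁻¹)) / ((Real.pi:ℝ):ℂ))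
      = -(2*(Real.sqrt 2:ℂ)/(3*((Real.pi:ℝ):ℂ))) := by
    have h1 : (2 * (Real.sqrt 2 : ℂ))⁻¹ = (Real.sqrt 2:ℂ)/4 := by
      refine inv_eq_of_mul_eq_one_right ?_
      linear_combination s2sq/2
    rw [h1]
    field_simp [piC_ne]
    ring
  rw [hval] at h
  apply h.congr'
  filter_upwards [ev_sw_ne, ev_ne] with z hsw hz1
  have h1z : (1:ℂ) - z ≠ 0 := sub_ne_zero.2 fun h => hz1 h.symm
  have hw : sw z * sw z = 1 - z := cpow_half_mul_self _
  rw [K1C_eq, sqrtMul_s19]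
  show (z * ((phiC z - (Real.sqrt 2:ℂ) * sw z)/(sw z)^3)
      + (-(Real.sqrt 2:ℂ) - (su z - (Real.sqrt 2:ℂ))/(1-z))) / _
      = ((1 - (z - (z * phiC z - sw z * su z) / _))/(1-z) - 1)/sw z
  rw [← hw]
  field_simp [piC_ne]
  linear_combination (((Real.pi:ℝ):ℂ)
    - (Real.sqrt 2:ℂ)*(sw z)) * hw

lemma tr_lim : Tendsto (fun z : ℂ => (1 - K1C z)/(1-z)) L1f (𝓝 1) := by
  have h : Tendsto (fun z : ℂ => 1 + (((1 - K1C z)/(1-z) - 1)/sw z) * sw z) L1f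
      (𝓝 (1 + (-(2*(Real.sqrt 2:ℂ)/(3*((Real.pi:ℝ):ℂ)))) * 0)) :=
    tendsto_const_nhds.add (tr5.mul tendsto_sw)
  have h' : (1:ℂ) + (-(2*(Real.sqrt 2:ℂ)/(3*((Real.pi:ℝ):ℂ)))) * 0 = 1 := by ring
  rw [h'] at h
  apply h.congr'
  filter_upwards [ev_sw_ne] with z hsw
  field_simp
  ring

lemma ev_K1_ne : ∀ᶠ z in L1f, (1:ℂ) - K1C z ≠ 0 := by
  filter_upwards [tr_lim.eventually_ne one_ne_zero] with z hz
  intro h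
  rw [h] at hz
  simp at hz

lemma tK1lim : Tendsto K1C L1f (𝓝 1) := by
  have h : Tendsto (fun z : ℂ => 1 - ((1 - K1C z)/(1-z)) * (1 - z)) L1f
      (𝓝 (1 - 1 * 0)) := tendsto_const_nhds.sub (tr_lim.mul tendsto_one_sub)
  have h' : (1:ℂ) - 1 * 0 = 1 := by ring
  rw [h'] at h
  apply h.congr'
  filter_upwards [ev_sub_ne] with z h1z
  field_simp
  ring

lemma tK1 : Tendsto K1C L1f L1f := by
  rw [tendsto_nhdsWithin_iff]
  refine ⟨tK1lim, ?_⟩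
  filter_upwards [ev_K1_ne] with z hz
  simp only [Set.mem_compl_iff, Set.mem_singleton_iff]
  intro h
  exact hz (by rw [h]; ring)

noncomputable def qf (z : ℂ) : ℂ := ((1 - K1C z)/(1-z)) ^ ((1:ℂ)/2)

lemma tq1 : Tendsto qf L1f (𝓝 1) := by
  have hc : ContinuousAt (fun w : ℂ => w ^ ((1:ℂ)/2)) 1 :=
    continuousAt_cpow_const (by rw [Complex.mem_slitPlane_iff]; norm_num)
  have h1 := hc.tendsto.comp tr_lim
  simp only [Function.comp, one_cpow] at h1
  exact h1

lemma c0r_pos : (0:ℝ) < Real.sqrt 2 / (3*Real.pi) := by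
  have := Real.pi_pos
  have h2 : (0:ℝ) < Real.sqrt 2 := Real.sqrt_pos.2 (by norm_num)
  positivity

lemma tqrate : Tendsto (fun z : ℂ => (qf z - 1)/sw z) L1f
    (𝓝 (-((Real.sqrt 2 / (3*Real.pi) : ℝ) : ℂ))) := by
  have hq1 : ∀ᶠ z in L1f, qf z + 1 ≠ 0 := by
    have : Tendsto (fun z : ℂ => qf z + 1) L1f (𝓝 (1+1)) := tq1.add tendsto_const_nhds
    exact this.eventually_ne (by norm_num)
  have h : Tendsto (fun z : ℂ =>
      (((1 - K1C z)/(1-z) - 1)/sw z) * (qf z + 1)⁻¹) L1f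
      (𝓝 ((-(2*(Real.sqrt 2:ℂ)/(3*((Real.pi:ℝ):ℂ)))) * (1+1)⁻¹)) := by
    refine tr5.mul ?_
    exact (tq1.add tendsto_const_nhds).inv₀ (by norm_num)
  have hval : (-(2*(Real.sqrt 2:ℂ)/(3*((Real.pi:ℝ):ℂ)))) * ((1:ℂ)+1)⁻¹
      = -((Real.sqrt 2 / (3*Real.pi) : ℝ) : ℂ) := by
    push_cast
    ring
  rw [hval] at h
  apply h.congr'
  filter_upwards [hq1, ev_sw_ne] with z hq hsw
  have hqq : qf z * qf z = (1 - K1C z)/(1-z) := cpow_half_mul_self _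
  have : (1 - K1C z)/(1-z) - 1 = (qf z - 1) * (qf z + 1) := by
    linear_combination -hqq
  rw [this]
  field_simp

lemma ev_swq : ∀ᶠ z in L1f, sw (K1C z) = sw z * qf z := by
  set c0 : ℝ := Real.sqrt 2 / (3*Real.pi) with hc0def
  have hc0 : 0 < c0 := c0r_pos
  have hδ : Tendsto (fun z : ℂ => (qf z - 1)/sw z + (c0:ℂ)) L1f (𝓝 0) := by
    have h0 : -((Real.sqrt 2 / (3*Real.pi) : ℝ) : ℂ) + (c0:ℂ) = 0 := by
      rw [hc0def]; ring
    have h := tqrate.add (tendsto_const_nhds (x := (c0:ℂ)))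
    rw [h0] at h
    exact h
  have hδn : Tendsto (fun z : ℂ => ‖(qf z - 1)/sw z + (c0:ℂ)‖) L1f (𝓝 0) := by
    simpa [tendsto_zero_iff_norm_tendsto_zero] using hδ
  have hswn : Tendsto (fun z : ℂ => ‖sw z‖) L1f (𝓝 0) := by
    simpa [tendsto_zero_iff_norm_tendsto_zero] using tendsto_sw
  filter_upwards [ev_ne, ev_sw_ne, ev_sub_ne,
    hδn.eventually_lt_const (half_pos hc0),
    hswn.eventually_lt_const (show (0:ℝ) < 1/(3*c0) by positivity)] with z hz1 hswne h1z hδs hsws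
  have hw : sw z * sw z = 1 - z := cpow_half_mul_self _
  have hqq : qf z * qf z = (1 - K1C z)/(1-z) := cpow_half_mul_self _
  set g : ℂ := (qf z - 1)/sw z with hgdef
  have hq_eq : qf z = 1 + g * sw z := by
    rw [hgdef]
    field_simp
    ring
  have hsq : (sw z * qf z) * (sw z * qf z) = 1 - K1C z := by
    calc (sw z * qf z) * (sw z * qf z) = (sw z * sw z) * (qf z * qf z) := by ring
      _ = (1-z) * ((1 - K1C z)/(1-z)) := by rw [hw, hqq]
      _ = 1 - K1C z := by field_simp
  have hpos : 0 < (sw z * qf z).re := by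
    set w : ℂ := sw z with hwdef
    set δ : ℂ := g + (c0:ℂ) with hδdef
    have hgval : g = -(c0:ℂ) + δ := by rw [hδdef]; ring
    have hexpand : w * qf z = w + (w*w) * (-(c0:ℂ)) + (w*w) * δ := by
      rw [hq_eq, hgval]; ring
    have hre : (w * qf z).re
        = w.re + (-c0) * ((w*w).re) + ((w*w) * δ).re := by
      rw [hexpand]
      simp [Complex.add_re, Complex.mul_re, Complex.ofReal_re, Complex.ofReal_im]
      ring
    have hwre : 0 ≤ w.re := by
      rw [hwdef]
      exact re_cpow_half_nonneg _
    have hww : (w*w).re = w.re*w.re - w.im*w.im := by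
      simp [Complex.mul_re]
    have habs2 : ‖w‖^2 = w.re*w.re + w.im*w.im := by
      rw [Complex.sq_norm]
      simp [Complex.normSq_apply]
    have hδbd : -(‖w‖^2 * (c0/2)) ≤ ((w*w) * δ).re := by
      have h1 : ‖(w*w) * δ‖ ≤ ‖w‖^2 * (c0/2) := by
        rw [norm_mul, norm_mul]
        have : ‖δ‖ ≤ c0/2 := le_of_lt hδs
        calc ‖w‖ * ‖w‖ * ‖δ‖ ≤ ‖w‖ * ‖w‖ * (c0/2) := by
              apply mul_le_mul_of_nonneg_left this (by positivity)
          _ = ‖w‖^2 * (c0/2) := by ring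
      have h2 : -‖(w*w) * δ‖ ≤ ((w*w) * δ).re := by
        have := Complex.abs_re_le_norm ((w*w) * δ)
        have h3 : |((w*w)*δ).re| ≤ ‖(w*w)*δ‖ := this
        cases abs_le.1 h3 with
        | intro hl hr => linarith
      linarith
    have hwne : w ≠ 0 := hswne
    have hnsq : 0 < w.re*w.re + w.im*w.im := by
      have := Complex.normSq_pos.2 hwne
      simpa [Complex.normSq_apply] using this
    have hxle : w.re ≤ ‖w‖ := Complex.re_le_norm w
    have hwn0 : 0 ≤ ‖w‖ := norm_nonneg w
    have hsw3 : ‖w‖ * (3*c0) < 1 := by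
      calc ‖w‖ * (3*c0) < (1/(3*c0)) * (3*c0) := by
            apply mul_lt_mul_of_pos_right hsws (by positivity)
        _ = 1 := by field_simp
    have hx2 : w.re*w.re ≤ w.re*‖w‖ := mul_le_mul_of_nonneg_left hxle hwre
    have key1 : w.re * (‖w‖*(3*c0)) ≤ w.re := by
      calc w.re*(‖w‖*(3*c0)) ≤ w.re*1 := mul_le_mul_of_nonneg_left hsw3.le hwre
        _ = w.re := mul_one _
    rw [hre, hww]
    nlinarith [hδbd, habs2, hnsq, key1, hx2,
      mul_le_mul_of_nonneg_left hx2 (by positivity : (0:ℝ) ≤ 3*c0/2),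
      mul_nonneg hc0.le (mul_self_nonneg w.im),
      mul_nonneg hwre hc0.le, hwre]
  exact cpow_half_eq_of_sq hsq hpos

lemma tswK1 : Tendsto (fun z : ℂ => sw (K1C z) / sw z) L1f (𝓝 1) := by
  apply tq1.congr'
  filter_upwards [ev_swq, ev_sw_ne] with z h1 h2
  rw [h1]
  field_simp

lemma tIter : ∀ j : ℕ, Tendsto (fun z : ℂ => K1C^[j] z) L1f L1f := by
  intro j
  induction j with
  | zero => exact (tendsto_id : Tendsto id L1f L1f)
  | succ j ih =>
      have h := tK1.comp ih
      apply h.congr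
      intro z
      rw [Function.iterate_succ_apply']
      rfl

lemma ev_iter_sw_ne (j : ℕ) : ∀ᶠ z in L1f, sw (K1C^[j] z) ≠ 0 := (tIter j).eventually ev_sw_ne

lemma tswIter : ∀ j : ℕ, Tendsto (fun z : ℂ => sw (K1C^[j] z) / sw z) L1f (𝓝 1) := by
  intro j
  induction j with
  | zero =>
      apply (tendsto_const_nhds (x := (1:ℂ))).congr'
      filter_upwards [ev_sw_ne] with z hsw
      simp [div_self hsw]
  | succ j ih =>
      have h1 := tswK1.comp (tIter j)
      simp only [Function.comp_def] at h1
      have h := h1.mul ih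
      rw [one_mul] at h
      apply h.congr'
      filter_upwards [ev_iter_sw_ne j] with z hne
      rw [Function.iterate_succ_apply']
      field_simp

lemma tAj : ∀ j : ℕ, Tendsto (fun z : ℂ => (K1C^[j] z - z)/sw z) L1f (𝓝 0) := by
  intro j
  induction j with
  | zero =>
      apply (tendsto_const_nhds (x := (0:ℂ))).congr
      intro z
      simp
  | succ j ih =>
      have h1 := tK1sub.comp (tIter j)
      simp only [Function.comp_def] at h1
      have h := (h1.mul (tswIter j)).add ih
      rw [zero_mul, zero_add] at h
      apply h.congr'
      filter_upwards [ev_iter_sw_ne j, ev_sw_ne] with z hne hsw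
      rw [Function.iterate_succ_apply']
      field_simp
      ring

lemma tBj (j : ℕ) : Tendsto (fun z : ℂ => (K0C (K1C^[j] z) - 1)/sw z) L1f
    (𝓝 (-((Real.sqrt 2:ℂ) * 1)/((Real.pi:ℝ):ℂ))) := by
  have h1 := tphi1.comp (tIter j)
  simp only [Function.comp_def] at h1
  have h : Tendsto (fun z : ℂ =>
      -((phiC (K1C^[j] z) / sw (K1C^[j] z)) * (sw (K1C^[j] z) / sw z))/((Real.pi:ℝ):ℂ)) L1f
      (𝓝 (-((Real.sqrt 2:ℂ) * 1)/((Real.pi:ℝ):ℂ))) :=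
    ((h1.mul (tswIter j)).neg).div_const _
  apply h.congr'
  filter_upwards [ev_iter_sw_ne j, ev_sw_ne] with z hne hsw
  rw [K0C_eq]
  field_simp
  ring

noncomputable def cc (β : ℝ) (j : ℕ) : ℂ :=
  -((Real.sqrt 2:ℂ) * (1+(β:ℂ)^2) * j * (j+1) / (2*((Real.pi:ℝ):ℂ)))

lemma tQ (β : ℝ) : ∀ j : ℕ,
    Tendsto (fun z : ℂ => (NkC β j z - ((j:ℂ)+1)*(z+(β:ℂ)^2))/sw z) L1f (𝓝 (cc β j)) := by
  intro j
  induction j with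
  | zero =>
      have hc : cc β 0 = 0 := by simp [cc]
      rw [hc]
      apply (tendsto_const_nhds (x := (0:ℂ))).congr
      intro z
      show 0 = (NkC β 0 z - (((0:ℕ):ℂ)+1)*(z+(β:ℂ)^2))/sw z
      simp [NkC]
  | succ j ih =>
      have tN : Tendsto (NkC β j) L1f (𝓝 (((j:ℂ)+1)*(1+(β:ℂ)^2))) := by
        have hlin : Tendsto (fun z : ℂ => ((j:ℂ)+1)*(z+(β:ℂ)^2)) L1f
            (𝓝 (((j:ℂ)+1)*(1+(β:ℂ)^2))) := by
          exact ((tendsto_id1.add tendsto_const_nhds).const_mul _)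
        have h := hlin.add (ih.mul tendsto_sw)
        rw [show (((j:ℂ)+1)*(1+(β:ℂ)^2) + cc β j * 0) = ((j:ℂ)+1)*(1+(β:ℂ)^2) by ring] at h
        apply h.congr'
        filter_upwards [ev_sw_ne] with z hsw
        field_simp
        ring
      have h := ((tAj (j+1)).add (tN.mul (tBj j))).add ih
      have hval : ((0:ℂ) + (((j:ℂ)+1)*(1+(β:ℂ)^2)) * (-((Real.sqrt 2:ℂ) * 1)/((Real.pi:ℝ):ℂ)))
          + cc β j = cc β (j+1) := by
        simp only [cc]
        push_cast
        field_simp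
        ring
      rw [hval] at h
      apply h.congr'
      filter_upwards [ev_sw_ne] with z hsw
      show (K1C^[j+1] z - z)/sw z + NkC β j z * ((K0C (K1C^[j] z) - 1)/sw z)
          + (NkC β j z - ((j:ℂ)+1)*(z+(β:ℂ)^2))/sw z
          = (NkC β (j+1) z - (((j+1:ℕ):ℂ)+1)*(z+(β:ℂ)^2))/sw z
      rw [show NkC β (j+1) z = K1C^[j+1] z + NkC β j z * K0C (K1C^[j] z) + (β:ℂ)^2 from rfl]
      push_cast
      field_simp
      ring

theorem ntk_expansion_at_one (β : ℝ) (k : ℕ) (hk : 1 ≤ k) :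
    Tendsto (fun z : ℂ =>
        (NkC β k z - ((k : ℂ) + 1) * (z + (β : ℂ) ^ 2)) / ((1 - z) ^ ((1 : ℂ) / 2)))
      (nhdsWithin 1 Dslit)
      (nhds ((-(Real.sqrt 2 * (1 + β ^ 2) * k * (k + 1) / (2 * Real.pi)) : ℝ) : ℂ)) := by
  have hsub : Dslit ⊆ {(1:ℂ)}ᶜ := by
    intro z hz
    simp only [Set.mem_compl_iff, Set.mem_singleton_iff]
    intro h
    rw [h] at hz
    exact hz ⟨Complex.one_im, Or.inl (le_of_eq Complex.one_re.symm)⟩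
  have h := (tQ β k).mono_left (nhdsWithin_mono 1 hsub)
  have hval : ((-(Real.sqrt 2 * (1 + β ^ 2) * k * (k + 1) / (2 * Real.pi)) : ℝ) : ℂ)
      = cc β k := by
    rw [cc]
    push_cast
    ring
  rw [hval]
  exact h
end T5
end
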